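/- For any positive integers m and n, N(K_m×P_n) = Σ_{k=1}^{n} (n−k+1)·|C_{m,k}|, where |C_{m,k}| = [C(m,1), C(m,2), …, C(m,m)] · T^{k−1} · 1, T is the m×m matrix with entries t_{ij} = C(m,j) − C(m−i,j) when j ≤ m−i and t_{ij} = C(m,j) when j ≥ m−i+1, C(a,b) denotes the binomial coefficient, and 1 is the all-ones column vector of length m. -/

import Mathlib

open SimpleGraph Finset
open scoped Classical

/-- A connected set of a graph: a nonempty vertex subset inducing a connected subgraph. -/
def IsConnSet {V : Type*} (G : SimpleGraph V) (C : Finset V) : Prop :=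
  C.Nonempty ∧ (G.induce (C : Set V)).Connected

/-- `N(G)`: the number of connected sets of `G`. -/
noncomputable def numConnSets {V : Type*} (G : SimpleGraph V) : ℕ :=
  {C : Finset V | IsConnSet G C}.ncard
/-- The `m×m` transfer matrix `T` (0-indexed version of the 1-indexed matrix in the
paper): `t_{ij} = C(m,j) − C(m−i,j)` when `j ≤ m−i` and `t_{ij} = C(m,j)` when
`j ≥ m−i+1`. -/
def Tmat (m : ℕ) : Matrix (Fin m) (Fin m) ℕ := fun i j =>
  if j.1 + 1 ≤ m - (i.1 + 1) then
    Nat.choose m (j.1 + 1) - Nat.choose (m - (i.1 + 1)) (j.1 + 1)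
  else Nat.choose m (j.1 + 1)

namespace S7

lemma Tmat_eq (m : ℕ) (i j : Fin m) :
    Tmat m i j = Nat.choose m (j.1 + 1) - Nat.choose (m - (i.1 + 1)) (j.1 + 1) := by
  unfold Tmat
  split
  · rfl
  · rw [Nat.choose_eq_zero_of_lt (show m - (i.1+1) < j.1+1 by omega), Nat.sub_zero]

variable {m : ℕ}

def Valid (m : ℕ) {k : ℕ} (f : Fin k → Finset (Fin m)) : Prop :=
  (∀ t, (f t).Nonempty) ∧
    ∀ (t : ℕ) (h : t + 1 < k), (f ⟨t, Nat.lt_of_succ_lt h⟩ ∩ f ⟨t + 1, h⟩).Nonempty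

noncomputable def seqSet (m k : ℕ) : Finset (Fin k → Finset (Fin m)) :=
  Finset.univ.filter (fun f => Valid m f)

def u (m k : ℕ) (i : Fin m) : ℕ := ∑ j : Fin m, (Tmat m ^ k) i j

lemma card_pred_lt (S : Finset (Fin m)) (hS : S.Nonempty) : S.card - 1 < m := by
  have h1 : 1 ≤ S.card := Finset.card_pos.2 hS
  have h2 : S.card ≤ m := by
    simpa using Finset.card_le_univ S
  omega

lemma count_inter (S : Finset (Fin m)) (i : Fin m) :
    (Finset.univ.filter
        (fun S' : Finset (Fin m) => S'.card = i.1 + 1 ∧ (S' ∩ S).Nonempty)).card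
      = m.choose (i.1 + 1) - (m - S.card).choose (i.1 + 1) := by
  classical
  set A : Finset (Finset (Fin m)) :=
    Finset.univ.filter (fun S' : Finset (Fin m) => S'.card = i.1 + 1) with hA
  have hAcard : A.card = m.choose (i.1 + 1) := by
    have : A = Finset.powersetCard (i.1 + 1) (Finset.univ : Finset (Fin m)) := by
      ext S'
      simp [hA, Finset.mem_powersetCard]
    rw [this, Finset.card_powersetCard, Finset.card_univ, Fintype.card_fin]
  have hfil : Finset.univ.filter
      (fun S' : Finset (Fin m) => S'.card = i.1 + 1 ∧ (S' ∩ S).Nonempty)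
      = A.filter (fun S' => (S' ∩ S).Nonempty) := by
    rw [hA, Finset.filter_filter]
  have hneg : A.filter (fun S' => ¬ (S' ∩ S).Nonempty)
      = Finset.powersetCard (i.1 + 1) Sᶜ := by
    ext S'
    simp only [hA, Finset.mem_filter, Finset.mem_univ, true_and,
      Finset.mem_powersetCard, Finset.not_nonempty_iff_eq_empty,
      Finset.eq_empty_iff_forall_notMem, Finset.subset_iff,
      Finset.mem_inter, Finset.mem_compl, not_and]
    tauto
  have hnegcard : (A.filter (fun S' => ¬ (S' ∩ S).Nonempty)).card
      = (m - S.card).choose (i.1 + 1) := by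
    rw [hneg, Finset.card_powersetCard, Finset.card_compl, Fintype.card_fin]
  have hsum := Finset.card_filter_add_card_filter_not
    (s := A) (p := fun S' => (S' ∩ S).Nonempty)
  rw [hfil]
  omega

def uN (m k s : ℕ) : ℕ := if h : s - 1 < m then u m k ⟨s - 1, h⟩ else 0

lemma uN_eq (k : ℕ) (S : Finset (Fin m)) (hS : S.Nonempty) :
    uN m k S.card = u m k ⟨S.card - 1, card_pred_lt S hS⟩ := by
  rw [uN, dif_pos (card_pred_lt S hS)]

lemma cons_succ' {α : Type*} {k : ℕ} (x : α) (p : Fin k → α) (t : ℕ) (h : t + 1 < k + 1) :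
    (Fin.cons x p : Fin (k + 1) → α) ⟨t + 1, h⟩ = p ⟨t, by omega⟩ := by
  have e : (⟨t + 1, h⟩ : Fin (k + 1)) = Fin.succ ⟨t, by omega⟩ := rfl
  rw [e, Fin.cons_succ]

lemma valid_cons {k : ℕ} (S : Finset (Fin m)) (g : Fin (k + 1) → Finset (Fin m)) :
    Valid m (Fin.cons S g) ↔ S.Nonempty ∧ (S ∩ g 0).Nonempty ∧ Valid m g := by
  constructor
  · rintro ⟨h1, h2⟩
    refine ⟨by simpa using h1 0, ?_, fun t => by simpa using h1 t.succ, fun t h => ?_⟩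
    · have h20 := h2 0 (by omega)
      rw [cons_succ'] at h20
      exact h20
    · have h2t := h2 (t + 1) (by omega)
      rw [cons_succ', cons_succ'] at h2t
      exact h2t
  · rintro ⟨hS, hint, hg1, hg2⟩
    refine ⟨fun t => ?_, fun t h => ?_⟩
    · refine Fin.cases ?_ (fun t' => ?_) t
      · simpa using hS
      · simpa using hg1 t'
    · cases t with
      | zero =>
        rw [cons_succ']
        exact hint
      | succ t' =>
        rw [cons_succ', cons_succ']
        exact hg2 t' (by omega)

lemma uN_expand (k : ℕ) (S' : Finset (Fin m)) (hS' : S'.Nonempty) :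
    uN m k S'.card = ∑ i : Fin m, (if S'.card = i.1 + 1 then u m k i else 0) := by
  rw [uN_eq k S' hS']
  rw [Finset.sum_eq_single_of_mem (⟨S'.card - 1, card_pred_lt S' hS'⟩ : Fin m)
    (Finset.mem_univ _)]
  · rw [if_pos]
    have := Finset.card_pos.2 hS'
    simp
    omega
  · intro b _ hb
    rw [if_neg]
    intro hc
    apply hb
    have := Finset.card_pos.2 hS'
    apply Fin.ext
    simp
    omega

lemma W_card (k : ℕ) : ∀ (S : Finset (Fin m)), S.Nonempty →
    (Finset.univ.filter
        (fun f : Fin (k + 1) → Finset (Fin m) => Valid m f ∧ f 0 = S)).card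
      = uN m k S.card := by
  induction k with
  | zero =>
    intro S hS
    have hset : (Finset.univ.filter
        (fun f : Fin 1 → Finset (Fin m) => Valid m f ∧ f 0 = S))
        = {fun _ => S} := by
      ext f
      simp only [Finset.mem_filter, Finset.mem_univ, true_and, Finset.mem_singleton]
      constructor
      · rintro ⟨-, h⟩
        funext t
        have : t = 0 := Subsingleton.elim t 0
        rw [this, h]
      · rintro rfl
        exact ⟨⟨fun _ => hS, fun t h => by omega⟩, rfl⟩
    rw [hset, Finset.card_singleton, uN_eq 0 S hS]
    simp [u, Matrix.one_apply]
  | succ k ih =>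
    intro S hS
    classical
    set B : Finset (Finset (Fin m)) :=
      Finset.univ.filter (fun S' => (S' ∩ S).Nonempty) with hB
    have hstep : (Finset.univ.filter
        (fun f : Fin (k + 2) → Finset (Fin m) => Valid m f ∧ f 0 = S)).card
        = ∑ S' ∈ B, (Finset.univ.filter
            (fun g : Fin (k + 1) → Finset (Fin m) => Valid m g ∧ g 0 = S')).card := by
      rw [← Finset.card_sigma]
      refine Finset.card_nbij'
        (fun f => (⟨Fin.tail f 0, Fin.tail f⟩ :
          Σ _ : Finset (Fin m), Fin (k + 1) → Finset (Fin m)))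
        (fun x => Fin.cons S x.2) ?_ ?_ ?_ ?_
      · intro f hf
        simp only [Finset.mem_coe, Finset.mem_filter, Finset.mem_univ, true_and] at hf
        obtain ⟨hv, h0⟩ := hf
        have hc : Valid m (Fin.cons (f 0) (Fin.tail f)) := by
          rw [Fin.cons_self_tail]; exact hv
        rw [valid_cons] at hc
        obtain ⟨h1, h2, h3⟩ := hc
        simp only [Finset.mem_coe, Finset.mem_sigma, Finset.mem_filter, Finset.mem_univ, true_and, hB]
        refine ⟨?_, h3, trivial⟩
        rw [Finset.inter_comm, ← h0]
        exact h2
      · rintro ⟨S', g⟩ hx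
        simp only [Finset.mem_coe, Finset.mem_sigma, Finset.mem_filter, Finset.mem_univ, true_and, hB] at hx
        obtain ⟨hint, hv, h0⟩ := hx
        simp only [Finset.mem_coe, Finset.mem_filter, Finset.mem_univ, true_and]
        constructor
        · rw [valid_cons]
          exact ⟨hS, by rw [Finset.inter_comm, h0]; exact hint, hv⟩
        · simp
      · intro f hf
        simp only [Finset.mem_coe, Finset.mem_filter, Finset.mem_univ, true_and] at hf
        simp only
        rw [← hf.2, Fin.cons_self_tail]
      · rintro ⟨S', g⟩ hx
        simp only [Finset.mem_coe, Finset.mem_sigma, Finset.mem_filter, Finset.mem_univ, true_and, hB] at hx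
        obtain ⟨-, -, h0⟩ := hx
        simp only [Fin.tail_cons]
        rw [h0]
    rw [hstep]
    have hsum1 : ∑ S' ∈ B, (Finset.univ.filter
            (fun g : Fin (k + 1) → Finset (Fin m) => Valid m g ∧ g 0 = S')).card
        = ∑ S' ∈ B, ∑ i : Fin m, (if S'.card = i.1 + 1 then u m k i else 0) := by
      apply Finset.sum_congr rfl
      intro S' hS'
      have hne : S'.Nonempty := by
        rw [hB, Finset.mem_filter] at hS'
        exact hS'.2.mono Finset.inter_subset_left
      rw [ih S' hne, uN_expand k S' hne]
    rw [hsum1, Finset.sum_comm]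
    have hsum2 : ∀ i : Fin m,
        (∑ S' ∈ B, if S'.card = i.1 + 1 then u m k i else 0)
        = Tmat m ⟨S.card - 1, card_pred_lt S hS⟩ i * u m k i := by
      intro i
      rw [← Finset.sum_filter, Finset.sum_const, smul_eq_mul]
      congr 1
      have hBf : B.filter (fun S' => S'.card = i.1 + 1)
          = Finset.univ.filter (fun S' : Finset (Fin m) =>
              S'.card = i.1 + 1 ∧ (S' ∩ S).Nonempty) := by
        rw [hB, Finset.filter_filter]
        apply Finset.filter_congr
        intro S' _
        tauto
      rw [hBf, count_inter, Tmat_eq]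
      have e2 : ((⟨S.card - 1, card_pred_lt S hS⟩ : Fin m) : ℕ) + 1 = S.card := by
        show S.card - 1 + 1 = S.card
        exact Nat.succ_pred_eq_of_pos (Finset.card_pos.2 hS)
      rw [e2]
    rw [Finset.sum_congr rfl (fun i _ => hsum2 i), uN_eq (k+1) S hS]
    unfold u
    rw [pow_succ']
    simp only [Matrix.mul_apply]
    rw [Finset.sum_comm]
    simp [Finset.mul_sum]

lemma choose_card (i : Fin m) :
    (Finset.univ.filter (fun S' : Finset (Fin m) => S'.card = i.1 + 1)).card
      = m.choose (i.1 + 1) := by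
  have h : Finset.univ.filter (fun S' : Finset (Fin m) => S'.card = i.1 + 1)
      = Finset.powersetCard (i.1 + 1) (Finset.univ : Finset (Fin m)) := by
    ext S'
    simp [Finset.mem_powersetCard]
  rw [h, Finset.card_powersetCard, Finset.card_univ, Fintype.card_fin]

lemma seq_card (k : ℕ) :
    (seqSet m (k + 1)).card
      = ∑ i : Fin m, ∑ j : Fin m, m.choose (i.1 + 1) * (Tmat m ^ k) i j := by
  classical
  have h1 : (seqSet m (k+1)).card
      = ∑ S ∈ (Finset.univ : Finset (Finset (Fin m))),
          ((seqSet m (k+1)).filter (fun f => f 0 = S)).card :=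
    Finset.card_eq_sum_card_fiberwise (fun f _ => Finset.mem_univ (f 0))
  rw [h1]
  have h2 : ∀ S : Finset (Fin m),
      ((seqSet m (k+1)).filter (fun f => f 0 = S)).card
      = ∑ i : Fin m, (if S.card = i.1 + 1 then u m k i else 0) := by
    intro S
    have hfil : (seqSet m (k+1)).filter (fun f => f 0 = S)
        = Finset.univ.filter
            (fun f : Fin (k+1) → Finset (Fin m) => Valid m f ∧ f 0 = S) := by
      rw [seqSet, Finset.filter_filter]
    by_cases hS : S.Nonempty
    · rw [hfil, W_card k S hS, uN_expand k S hS]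
    · have hemp : (seqSet m (k+1)).filter (fun f => f 0 = S) = ∅ := by
        rw [hfil]
        apply Finset.filter_eq_empty_iff.2
        intro f _
        rintro ⟨hv, h0⟩
        exact hS (h0 ▸ hv.1 0)
      rw [hemp, Finset.card_empty]
      rw [Finset.not_nonempty_iff_eq_empty] at hS
      subst hS
      simp
  rw [Finset.sum_congr rfl (fun S _ => h2 S), Finset.sum_comm]
  apply Finset.sum_congr rfl
  intro i _
  rw [← Finset.sum_filter, Finset.sum_const, smul_eq_mul, choose_card]
  simp only [u, Finset.mul_sum]

section Graph

variable {n : ℕ}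

/-- The graph `K_m □ P_n`. -/
def GG (m n : ℕ) : SimpleGraph (Fin m × Fin n) :=
  (⊤ : SimpleGraph (Fin m)) □ pathGraph n

def Cross (C : Finset (Fin m × Fin n)) (j : ℕ) : Prop :=
  ∃ (i : Fin m) (h1 : j < n) (h2 : j + 1 < n),
    (i, (⟨j, h1⟩ : Fin n)) ∈ C ∧ (i, (⟨j + 1, h2⟩ : Fin n)) ∈ C

lemma cross_of_walk (C : Finset (Fin m × Fin n))
    (x y : ↑(C : Set (Fin m × Fin n)))
    (w : ((GG m n).induce (C : Set (Fin m × Fin n))).Walk x y) :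
    ∀ j : ℕ, ((x : Fin m × Fin n).2 : ℕ) ≤ j → j < ((y : Fin m × Fin n).2 : ℕ) →
      Cross C j := by
  induction w with
  | nil =>
    intro j h1 h2; omega
  | @cons u z v a w ih =>
    intro j hx hy
    by_cases hz : ((z : Fin m × Fin n).2 : ℕ) ≤ j
    · exact ih j hz hy
    · push_neg at hz
      have ha : (GG m n).Adj ↑u ↑z := a
      rw [GG, SimpleGraph.boxProd_adj] at ha
      rcases ha with ⟨-, hcol⟩ | ⟨hp, hfst⟩
      · exfalso
        have : ((u : Fin m × Fin n).2 : ℕ) = ((z : Fin m × Fin n).2 : ℕ) := by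
          rw [hcol]
        omega
      · rw [pathGraph_adj] at hp
        rcases hp with hpa | hpb
        · -- u.2 + 1 = z.2
          have hju : ((u : Fin m × Fin n).2 : ℕ) = j := by omega
          have h1 : j < n := by
            have := ((u : Fin m × Fin n).2).isLt; omega
          have h2 : j + 1 < n := by
            have := ((z : Fin m × Fin n).2).isLt; omega
          refine ⟨(u : Fin m × Fin n).1, h1, h2, ?_, ?_⟩
          · have e : ((u : Fin m × Fin n).1, (⟨j, h1⟩ : Fin n)) = (u : Fin m × Fin n) := by
              exact Prod.ext_iff.2 ⟨rfl, Fin.ext hju.symm⟩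
            rw [e]
            exact Finset.mem_coe.1 u.2
          · have e : ((u : Fin m × Fin n).1, (⟨j + 1, h2⟩ : Fin n)) = (z : Fin m × Fin n) := by
              exact Prod.ext_iff.2 ⟨hfst,
                Fin.ext (show j + 1 = (((z : Fin m × Fin n)).2 : ℕ) by omega)⟩
            rw [e]
            exact Finset.mem_coe.1 z.2
        · exfalso; omega

lemma reach_same_col {C : Finset (Fin m × Fin n)}
    (x y : ↑(C : Set (Fin m × Fin n)))
    (h : (x : Fin m × Fin n).2 = (y : Fin m × Fin n).2) :
    ((GG m n).induce (C : Set (Fin m × Fin n))).Reachable x y := by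
  by_cases hxy : x = y
  · rw [hxy]
  · apply SimpleGraph.Adj.reachable
    show (GG m n).Adj ↑x ↑y
    rw [GG, SimpleGraph.boxProd_adj]
    left
    refine ⟨?_, h⟩
    simp only [SimpleGraph.top_adj]
    intro hfst
    exact hxy (Subtype.ext (Prod.ext_iff.2 ⟨hfst, h⟩))

lemma reach_aux {C : Finset (Fin m × Fin n)}
    (hcross : ∀ j : ℕ, (∃ p ∈ C, ((p.2 : ℕ) ≤ j)) → (∃ q ∈ C, j < (q.2 : ℕ)) →
      Cross C j) :
    ∀ (d : ℕ) (x y : ↑(C : Set (Fin m × Fin n))),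
      ((x : Fin m × Fin n).2 : ℕ) ≤ ((y : Fin m × Fin n).2 : ℕ) →
      ((y : Fin m × Fin n).2 : ℕ) - ((x : Fin m × Fin n).2 : ℕ) = d →
      ((GG m n).induce (C : Set (Fin m × Fin n))).Reachable x y := by
  intro d
  induction d with
  | zero =>
    intro x y hle hd
    exact reach_same_col x y (Fin.ext (by omega))
  | succ d ih =>
    intro x y hle hd
    have hxy : ((x : Fin m × Fin n).2 : ℕ) < ((y : Fin m × Fin n).2 : ℕ) := by omega
    obtain ⟨i, h1, h2, hm1, hm2⟩ := hcross ((x : Fin m × Fin n).2 : ℕ)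
      ⟨↑x, Finset.mem_coe.1 x.2, le_refl _⟩ ⟨↑y, Finset.mem_coe.1 y.2, hxy⟩
    set z1 : ↑(C : Set (Fin m × Fin n)) :=
      ⟨(i, ⟨((x : Fin m × Fin n).2 : ℕ), h1⟩), Finset.mem_coe.2 hm1⟩ with hz1
    set z2 : ↑(C : Set (Fin m × Fin n)) :=
      ⟨(i, ⟨((x : Fin m × Fin n).2 : ℕ) + 1, h2⟩), Finset.mem_coe.2 hm2⟩ with hz2
    have r1 : ((GG m n).induce (C : Set (Fin m × Fin n))).Reachable x z1 :=
      reach_same_col x z1 (Fin.ext rfl)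
    have r2 : ((GG m n).induce (C : Set (Fin m × Fin n))).Adj z1 z2 := by
      show (GG m n).Adj _ _
      rw [GG, SimpleGraph.boxProd_adj]
      right
      refine ⟨?_, rfl⟩
      rw [pathGraph_adj]
      left
      rfl
    have r3 : ((GG m n).induce (C : Set (Fin m × Fin n))).Reachable z2 y := by
      apply ih z2 y
      · show ((x : Fin m × Fin n).2 : ℕ) + 1 ≤ _
        omega
      · show ((y : Fin m × Fin n).2 : ℕ) - (((x : Fin m × Fin n).2 : ℕ) + 1) = d
        omega
    exact r1.trans (r2.reachable.trans r3)

lemma isConn_iff (C : Finset (Fin m × Fin n)) :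
    IsConnSet (GG m n) C ↔ C.Nonempty ∧
      ∀ j : ℕ, (∃ p ∈ C, ((p.2 : ℕ) ≤ j)) → (∃ q ∈ C, j < (q.2 : ℕ)) → Cross C j := by
  constructor
  · rintro ⟨hne, hconn⟩
    refine ⟨hne, ?_⟩
    rintro j ⟨p, hp, hpj⟩ ⟨q, hq, hqj⟩
    have hreach := hconn.preconnected ⟨p, Finset.mem_coe.2 hp⟩ ⟨q, Finset.mem_coe.2 hq⟩
    exact hreach.elim (fun w => cross_of_walk C _ _ w j hpj hqj)
  · rintro ⟨hne, hcross⟩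
    have hne' : Nonempty ↑(C : Set (Fin m × Fin n)) := by
      obtain ⟨p, hp⟩ := hne
      exact ⟨⟨p, Finset.mem_coe.2 hp⟩⟩
    refine ⟨hne, (SimpleGraph.connected_iff _).2 ⟨?_, hne'⟩⟩
    intro x y
    rcases le_total ((x : Fin m × Fin n).2 : ℕ) ((y : Fin m × Fin n).2 : ℕ) with h | h
    · exact reach_aux hcross _ x y h rfl
    · exact (reach_aux hcross _ y x h rfl).symm

end Graph

section Count

variable {n : ℕ}

noncomputable def colset (C : Finset (Fin m × Fin n)) : Finset ℕ :=
  C.image (fun p => (p.2 : ℕ))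

lemma colset_nonempty {C : Finset (Fin m × Fin n)} (hC : C.Nonempty) :
    (colset C).Nonempty := hC.image _

noncomputable def aF (C : Finset (Fin m × Fin n)) : ℕ :=
  if h : C.Nonempty then (colset C).min' (colset_nonempty h) else 0

noncomputable def bF (C : Finset (Fin m × Fin n)) : ℕ :=
  if h : C.Nonempty then (colset C).max' (colset_nonempty h) else 0

noncomputable def key (C : Finset (Fin m × Fin n)) : ℕ × ℕ :=
  (aF C, bF C - aF C + 1)

lemma mem_colset {C : Finset (Fin m × Fin n)} {j : ℕ} :
    j ∈ colset C ↔ ∃ p ∈ C, (p.2 : ℕ) = j := by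
  simp [colset]

lemma aF_mem {C : Finset (Fin m × Fin n)} (hC : C.Nonempty) : aF C ∈ colset C := by
  rw [aF, dif_pos hC]; exact Finset.min'_mem _ _

lemma bF_mem {C : Finset (Fin m × Fin n)} (hC : C.Nonempty) : bF C ∈ colset C := by
  rw [bF, dif_pos hC]; exact Finset.max'_mem _ _

lemma aF_le {C : Finset (Fin m × Fin n)} (hC : C.Nonempty) {p : Fin m × Fin n}
    (hp : p ∈ C) : aF C ≤ (p.2 : ℕ) := by
  rw [aF, dif_pos hC]
  exact Finset.min'_le _ _ (mem_colset.2 ⟨p, hp, rfl⟩)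

lemma le_bF {C : Finset (Fin m × Fin n)} (hC : C.Nonempty) {p : Fin m × Fin n}
    (hp : p ∈ C) : (p.2 : ℕ) ≤ bF C := by
  rw [bF, dif_pos hC]
  exact Finset.le_max' _ _ (mem_colset.2 ⟨p, hp, rfl⟩)

lemma aF_le_bF {C : Finset (Fin m × Fin n)} (hC : C.Nonempty) : aF C ≤ bF C := by
  obtain ⟨p, hp, hpj⟩ := mem_colset.1 (aF_mem hC)
  have := le_bF hC hp
  have := aF_le hC hp
  omega

lemma bF_lt {C : Finset (Fin m × Fin n)} (hC : C.Nonempty) : bF C < n := by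
  obtain ⟨p, hp, hpj⟩ := mem_colset.1 (bF_mem hC)
  have := p.2.isLt
  omega

lemma aF_eq {C : Finset (Fin m × Fin n)} (hC : C.Nonempty) {a : ℕ}
    (ha : a ∈ colset C) (hlb : ∀ j ∈ colset C, a ≤ j) : aF C = a := by
  rw [aF, dif_pos hC]
  exact le_antisymm (Finset.min'_le _ _ ha) (Finset.le_min' _ _ _ hlb)

lemma bF_eq {C : Finset (Fin m × Fin n)} (hC : C.Nonempty) {b : ℕ}
    (hb : b ∈ colset C) (hub : ∀ j ∈ colset C, j ≤ b) : bF C = b := by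
  rw [bF, dif_pos hC]
  exact le_antisymm (Finset.max'_le _ _ _ hub) (Finset.le_max' _ _ hb)

/-- For a connected set, every column between `aF` and `bF` strictly below `bF` crosses. -/
lemma conn_cross {C : Finset (Fin m × Fin n)}
    (h : IsConnSet (GG m n) C) {j : ℕ} (h1 : aF C ≤ j) (h2 : j < bF C) :
    Cross C j := by
  obtain ⟨hne, hcross⟩ := (isConn_iff C).1 h
  obtain ⟨p, hp, hpj⟩ := mem_colset.1 (aF_mem hne)
  obtain ⟨q, hq, hqj⟩ := mem_colset.1 (bF_mem hne)
  exact hcross j ⟨p, hp, by omega⟩ ⟨q, hq, by omega⟩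

/-- For a connected set, every column in `[aF, bF]` is occupied. -/
lemma conn_col {C : Finset (Fin m × Fin n)}
    (h : IsConnSet (GG m n) C) {j : ℕ} (h1 : aF C ≤ j) (h2 : j ≤ bF C) :
    ∃ (i : Fin m) (hj : j < n), (i, (⟨j, hj⟩ : Fin n)) ∈ C := by
  rcases Nat.lt_or_ge j (bF C) with hlt | hge
  · obtain ⟨i, hj1, hj2, hm1, hm2⟩ := conn_cross h h1 hlt
    exact ⟨i, hj1, hm1⟩
  · have hj : j = bF C := by omega
    obtain ⟨q, hq, hqj⟩ := mem_colset.1 (bF_mem h.1)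
    subst hj
    refine ⟨q.1, by rw [← hqj]; exact q.2.isLt, ?_⟩
    have e : (q.1, (⟨bF C, by rw [← hqj]; exact q.2.isLt⟩ : Fin n)) = q :=
      Prod.ext_iff.2 ⟨rfl, Fin.ext hqj.symm⟩
    rw [e]
    exact hq

noncomputable def enc (a k : ℕ) (C : Finset (Fin m × Fin n)) : Fin k → Finset (Fin m) :=
  fun t => (C.filter (fun p => (p.2 : ℕ) = a + t.1)).image Prod.fst

noncomputable def dec (a k : ℕ) (f : Fin k → Finset (Fin m)) :
    Finset (Fin m × Fin n) :=
  Finset.univ.filter (fun p =>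
    a ≤ (p.2 : ℕ) ∧ ∃ h : (p.2 : ℕ) - a < k, p.1 ∈ f ⟨(p.2 : ℕ) - a, h⟩)

lemma mem_dec {a k : ℕ} {f : Fin k → Finset (Fin m)} {p : Fin m × Fin n} :
    p ∈ dec a k f ↔
      a ≤ (p.2 : ℕ) ∧ ∃ h : (p.2 : ℕ) - a < k, p.1 ∈ f ⟨(p.2 : ℕ) - a, h⟩ := by
  simp [dec]

lemma mem_enc {a k : ℕ} {C : Finset (Fin m × Fin n)} {t : Fin k} {i : Fin m} :
    i ∈ enc a k C t ↔ ∃ p ∈ C, (p.2 : ℕ) = a + t.1 ∧ p.1 = i := by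
  simp only [enc, Finset.mem_image, Finset.mem_filter]
  constructor
  · rintro ⟨p, ⟨hp, hc⟩, hi⟩; exact ⟨p, hp, hc, hi⟩
  · rintro ⟨p, hp, hc, hi⟩; exact ⟨p, ⟨hp, hc⟩, hi⟩

lemma fiber_card (a k : ℕ) (hk : 1 ≤ k) (hak : a + k ≤ n) :
    (((Finset.univ : Finset (Finset (Fin m × Fin n))).filter
        (fun C => IsConnSet (GG m n) C)).filter
        (fun C => key C = (a, k))).card = (seqSet m k).card := by
  classical
  refine Finset.card_nbij' (enc a k) (dec a k) ?_ ?_ ?_ ?_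
  · -- enc maps fibers to valid sequences
    intro C hC
    simp only [Finset.mem_coe, Finset.mem_filter, Finset.mem_univ, true_and] at hC
    obtain ⟨hconn, hkey⟩ := hC
    have hne : C.Nonempty := hconn.1
    have ha : aF C = a := by
      have := congrArg Prod.fst hkey; simpa [key] using this
    have hb : bF C = a + k - 1 := by
      have h2 := congrArg Prod.snd hkey
      simp only [key] at h2
      have := aF_le_bF hne
      simp only [key, ha] at h2 ⊢
      omega
    simp only [Finset.mem_coe, seqSet, Finset.mem_filter, Finset.mem_univ, true_and]
    constructor
    · intro t
      obtain ⟨i, hj, hmem⟩ := conn_col hconn (j := a + t.1) (by omega)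
        (by have := t.isLt; omega)
      exact ⟨i, mem_enc.2 ⟨(i, ⟨a + t.1, hj⟩), hmem, rfl, rfl⟩⟩
    · intro t ht
      obtain ⟨i, hj1, hj2, hm1, hm2⟩ := conn_cross hconn (j := a + t)
        (by omega) (by omega)
      refine ⟨i, Finset.mem_inter.2 ⟨?_, ?_⟩⟩
      · exact mem_enc.2 ⟨(i, ⟨a + t, hj1⟩), hm1, rfl, rfl⟩
      · exact mem_enc.2 ⟨(i, ⟨a + t + 1, hj2⟩), hm2, by simp; omega, rfl⟩
  · -- dec maps valid sequences into the fiber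
    intro f hf
    simp only [Finset.mem_coe, seqSet, Finset.mem_filter, Finset.mem_univ, true_and] at hf
    obtain ⟨hf1, hf2⟩ := hf
    have hcolbound : ∀ p ∈ dec (n := n) a k f, a ≤ (p.2 : ℕ) ∧ (p.2 : ℕ) < a + k := by
      intro p hp
      obtain ⟨h1, h2, -⟩ := mem_dec.1 hp
      omega
    have hvert : ∀ (j : ℕ) (hja : a ≤ j) (hjk : j < a + k) (i : Fin m)
        (hi : i ∈ f ⟨j - a, by omega⟩),
        (i, (⟨j, by omega⟩ : Fin n)) ∈ dec a k f := by
      intro j hja hjk i hi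
      refine mem_dec.2 ⟨hja, ?_, ?_⟩
      · show j - a < k
        omega
      · exact hi
    have hne : (dec (n := n) a k f).Nonempty := by
      obtain ⟨i, hi⟩ := hf1 ⟨0, by omega⟩
      exact ⟨_, hvert a (le_refl a) (by omega) i (by convert hi using 2; exact Fin.ext (by simp))⟩
    have hconn : IsConnSet (GG m n) (dec a k f) := by
      rw [isConn_iff]
      refine ⟨hne, ?_⟩
      rintro j ⟨p, hp, hpj⟩ ⟨q, hq, hqj⟩
      have hpb := hcolbound p hp
      have hqb := hcolbound q hq
      have hja : a ≤ j := by omega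
      have hjk : j + 1 < a + k := by omega
      obtain ⟨i, hi⟩ := hf2 (j - a) (by omega)
      rw [Finset.mem_inter] at hi
      refine ⟨i, by omega, by omega, ?_, ?_⟩
      · exact hvert j hja (by omega) i hi.1
      · refine hvert (j + 1) (by omega) (by omega) i ?_
        convert hi.2 using 2
        exact Fin.ext (by simp; omega)
    have hkey : key (dec (n := n) a k f) = (a, k) := by
      have haf : aF (dec (n := n) a k f) = a := by
        apply aF_eq hne
        · obtain ⟨i, hi⟩ := hf1 ⟨0, by omega⟩
          exact mem_colset.2 ⟨_, hvert a (le_refl a) (by omega) i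
            (by convert hi using 2; exact Fin.ext (by simp)), rfl⟩
        · intro j hj
          obtain ⟨p, hp, hpj⟩ := mem_colset.1 hj
          have := hcolbound p hp
          omega
      have hbf : bF (dec (n := n) a k f) = a + k - 1 := by
        apply bF_eq hne
        · obtain ⟨i, hi⟩ := hf1 ⟨k - 1, by omega⟩
          exact mem_colset.2 ⟨_, hvert (a + k - 1) (by omega) (by omega) i
            (by convert hi using 2; exact Fin.ext (by simp; omega)), rfl⟩
        · intro j hj
          obtain ⟨p, hp, hpj⟩ := mem_colset.1 hj
          have := hcolbound p hp
          omega
      simp only [key, haf, hbf]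
      have : a + k - 1 - a + 1 = k := by omega
      rw [this]
    simp only [Finset.mem_coe, Finset.mem_filter, Finset.mem_univ, true_and]
    exact ⟨hconn, hkey⟩
  · -- left inverse : dec (enc C) = C
    intro C hC
    simp only [Finset.mem_coe, Finset.mem_filter, Finset.mem_univ, true_and] at hC
    obtain ⟨hconn, hkey⟩ := hC
    have hne : C.Nonempty := hconn.1
    have ha : aF C = a := by
      have := congrArg Prod.fst hkey; simpa [key] using this
    have hb : bF C = a + k - 1 := by
      have h2 := congrArg Prod.snd hkey
      simp only [key, ha] at h2
      have := aF_le_bF hne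
      rw [ha] at this
      omega
    ext p
    rw [mem_dec]
    constructor
    · rintro ⟨h1, h2, h3⟩
      obtain ⟨q, hq, hq2, hq1⟩ := mem_enc.1 h3
      have hq2' : (q.2 : ℕ) = a + ((p.2 : ℕ) - a) := hq2
      have : q = p := by
        refine Prod.ext_iff.2 ⟨hq1, Fin.ext ?_⟩
        omega
      rw [← this]
      exact hq
    · intro hp
      have h1 : a ≤ (p.2 : ℕ) := ha ▸ aF_le hne hp
      have h2 : (p.2 : ℕ) ≤ a + k - 1 := hb ▸ le_bF hne hp
      refine ⟨h1, by omega, ?_⟩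
      exact mem_enc.2 ⟨p, hp, by simp; omega, rfl⟩
  · -- right inverse : enc (dec f) = f
    intro f hf
    simp only [Finset.mem_coe, seqSet, Finset.mem_filter, Finset.mem_univ, true_and] at hf
    funext t
    ext i
    rw [mem_enc]
    constructor
    · rintro ⟨p, hp, hc, hi⟩
      obtain ⟨h1, h2, h3⟩ := mem_dec.1 hp
      rw [← hi]
      convert h3 using 2
      exact Fin.ext (by simp; omega)
    · intro hi
      have ht := t.isLt
      refine ⟨(i, (⟨a + t.1, by omega⟩ : Fin n)), ?_, by simp, rfl⟩
      refine mem_dec.2 ⟨by simp, ?_, ?_⟩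
      · show a + t.1 - a < k
        omega
      · show i ∈ f ⟨a + t.1 - a, by omega⟩
        have e : (⟨a + t.1 - a, by omega⟩ : Fin k) = t := Fin.ext (by simp)
        rw [e]
        exact hi

lemma conn_card :
    ((Finset.univ : Finset (Finset (Fin m × Fin n))).filter
      (fun C => IsConnSet (GG m n) C)).card
    = ∑ k ∈ Finset.Icc 1 n, (n - k + 1) * (seqSet m k).card := by
  classical
  have hmaps : ∀ C ∈ (Finset.univ : Finset (Finset (Fin m × Fin n))).filter
      (fun C => IsConnSet (GG m n) C),
      key C ∈ (Finset.range n) ×ˢ (Finset.Icc 1 n) := by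
    intro C hC
    simp only [Finset.mem_filter, Finset.mem_univ, true_and] at hC
    have hne := hC.1
    have h2 := bF_lt hne
    have h3 := aF_le_bF hne
    simp only [key, Finset.mem_product, Finset.mem_range, Finset.mem_Icc]
    omega
  rw [Finset.card_eq_sum_card_fiberwise hmaps, Finset.sum_product, Finset.sum_comm]
  apply Finset.sum_congr rfl
  intro k hk
  rw [Finset.mem_Icc] at hk
  have hfib : ∀ a ∈ Finset.range n,
      ((Finset.univ.filter
          (fun C : Finset (Fin m × Fin n) => IsConnSet (GG m n) C)).filter
        (fun C => key C = (a, k))).card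
      = if a + k ≤ n then (seqSet m k).card else 0 := by
    intro a _
    by_cases hak : a + k ≤ n
    · rw [if_pos hak, fiber_card a k hk.1 hak]
    · rw [if_neg hak, Finset.card_eq_zero]
      apply Finset.filter_eq_empty_iff.2
      intro C hC
      simp only [Finset.mem_filter, Finset.mem_univ, true_and] at hC
      intro hkey
      have hne := hC.1
      have ha' : aF C = a := by
        have := congrArg Prod.fst hkey; simpa [key] using this
      have hb' : bF C - aF C + 1 = k := by
        have := congrArg Prod.snd hkey; simpa [key] using this
      have := bF_lt hne
      have := aF_le_bF hne
      omega
  rw [Finset.sum_congr rfl hfib, Finset.sum_ite, Finset.sum_const_zero, add_zero,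
    Finset.sum_const, smul_eq_mul]
  congr 1
  have : (Finset.range n).filter (fun a => a + k ≤ n) = Finset.range (n - k + 1) := by
    ext a
    simp only [Finset.mem_filter, Finset.mem_range]
    omega
  rw [this, Finset.card_range]

end Count

end S7

/-- For positive integers `m, n`,
`N(K_m×P_n) = Σ_{k=1}^{n} (n−k+1)·([C(m,1),…,C(m,m)]·T^{k−1}·1)`. -/
theorem statement7 (m n : ℕ) (hm : 0 < m) (hn : 0 < n) :
    numConnSets ((⊤ : SimpleGraph (Fin m)) □ pathGraph n) =
      ∑ k ∈ Finset.Icc 1 n, (n - k + 1) *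
        (∑ i : Fin m, ∑ j : Fin m,
          Nat.choose m (i.1 + 1) * (Tmat m ^ (k - 1)) i j) := by
  classical
  have h0 : {C : Finset (Fin m × Fin n) |
        IsConnSet ((⊤ : SimpleGraph (Fin m)) □ pathGraph n) C}
      = ↑((Finset.univ : Finset (Finset (Fin m × Fin n))).filter
          (fun C => IsConnSet (S7.GG m n) C)) := by
    ext C
    rw [Finset.mem_coe, Finset.mem_filter]
    exact ⟨fun h => ⟨Finset.mem_univ _, h⟩, fun h => h.2⟩
  rw [numConnSets, h0, Set.ncard_coe_finset, S7.conn_card]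
  apply Finset.sum_congr rfl
  intro k hk
  rw [Finset.mem_Icc] at hk
  obtain ⟨k', rfl⟩ : ∃ k', k = k' + 1 := ⟨k - 1, by omega⟩
  rw [S7.seq_card k']
  simp
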